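/- Let τ be in the complex upper half-plane, ν, ρ ∈ ℂ, and B : ℤ → ℂ, and suppose the family (n,k) ↦ e^{2πiνn} · e^{2πiτ(k+n/2)²} · e^{4πi(k+n/2)(ρ+1/2)} · B(n) is summable over ℤ². Then ∑_{(n,k)∈ℤ²} e^{2πiνn} e^{2πiτ(k+n/2)²} e^{4πi(k+n/2)(ρ+1/2)} B(n) = ( ∑_{j∈ℤ} e^{4πiνj} B(2j) ) · θ₃(2ρ|2τ) − ( ∑_{j∈ℤ} e^{2πiν(2j+1)} B(2j+1) ) · θ₂(2ρ|2τ). -/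

import Mathlib

open Complex Real

/-- Jacobi theta function θ₂(z|τ). -/
noncomputable def theta2 (τ z : ℂ) : ℂ :=
  ∑' n : ℤ, Complex.exp ((π : ℂ) * Complex.I * τ * ((n : ℂ) + 1 / 2) ^ 2) *
    Complex.exp (2 * (π : ℂ) * Complex.I * ((n : ℂ) + 1 / 2) * z)

/-- Jacobi theta function θ₃(z|τ). -/
noncomputable def theta3 (τ z : ℂ) : ℂ :=
  ∑' n : ℤ, Complex.exp ((π : ℂ) * Complex.I * τ * (n : ℂ) ^ 2) *
    Complex.exp (2 * (π : ℂ) * Complex.I * (n : ℂ) * z)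

/-- Equiv from ℤ×ℤ to pairs with even first coordinate. -/
def evenEquiv : ℤ × ℤ ≃ {p : ℤ × ℤ // Even p.1} where
  toFun q := ⟨(2 * q.1, q.2 - q.1), ⟨q.1, by ring⟩⟩
  invFun p := (p.1.1 / 2, p.1.2 + p.1.1 / 2)
  left_inv q := by
    obtain ⟨j, m⟩ := q
    simp only [Prod.mk.injEq]
    constructor <;> omega
  right_inv p := by
    obtain ⟨⟨n, k⟩, ⟨j, hj⟩⟩ := p
    apply Subtype.ext
    simp only [Prod.mk.injEq] at hj ⊢
    constructor <;> omega

def oddEquiv : ℤ × ℤ ≃ {p : ℤ × ℤ // ¬ Even p.1} where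
  toFun q := ⟨(2 * q.1 + 1, q.2 - q.1), by simp [Int.even_iff]⟩
  invFun p := (p.1.1 / 2, p.1.2 + p.1.1 / 2)
  left_inv q := by
    obtain ⟨j, m⟩ := q
    simp only [Prod.mk.injEq]
    constructor <;> omega
  right_inv p := by
    obtain ⟨⟨n, k⟩, hp⟩ := p
    rw [Int.even_iff] at hp
    simp only [Subtype.mk.injEq, Prod.mk.injEq]
    constructor <;> omega

/-- Splitting of the discrete Fourier transform of conformal blocks into even and odd
Fourier shifts:
∑_{n,k} e^{2πiνn} q^{(k+n/2)²} e^{4πi(k+n/2)(ρ+1/2)} B(n)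
  = (∑_j e^{4πiνj} B(2j))·θ₃(2ρ|2τ) − (∑_j e^{2πiν(2j+1)} B(2j+1))·θ₂(2ρ|2τ). -/
theorem dual_partition_splitting (τ : ℂ) (hτ : 0 < τ.im) (ν ρ : ℂ) (B : ℤ → ℂ)
    (hsum : Summable (fun p : ℤ × ℤ =>
      Complex.exp (2 * (π : ℂ) * Complex.I * ν * (p.1 : ℂ)) *
        Complex.exp (2 * (π : ℂ) * Complex.I * τ * ((p.2 : ℂ) + (p.1 : ℂ) / 2) ^ 2) *
        Complex.exp (4 * (π : ℂ) * Complex.I * ((p.2 : ℂ) + (p.1 : ℂ) / 2) * (ρ + 1 / 2)) *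
        B p.1)) :
    ∑' p : ℤ × ℤ,
        Complex.exp (2 * (π : ℂ) * Complex.I * ν * (p.1 : ℂ)) *
          Complex.exp (2 * (π : ℂ) * Complex.I * τ * ((p.2 : ℂ) + (p.1 : ℂ) / 2) ^ 2) *
          Complex.exp (4 * (π : ℂ) * Complex.I * ((p.2 : ℂ) + (p.1 : ℂ) / 2) * (ρ + 1 / 2)) *
          B p.1 =
      (∑' j : ℤ, Complex.exp (4 * (π : ℂ) * Complex.I * ν * (j : ℂ)) * B (2 * j)) *
          theta3 (2 * τ) (2 * ρ) -
        (∑' j : ℤ, Complex.exp (2 * (π : ℂ) * Complex.I * ν * (2 * (j : ℂ) + 1)) *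
            B (2 * j + 1)) * theta2 (2 * τ) (2 * ρ) := by
  classical
  set f : ℤ × ℤ → ℂ := fun p =>
      Complex.exp (2 * (π : ℂ) * Complex.I * ν * (p.1 : ℂ)) *
        Complex.exp (2 * (π : ℂ) * Complex.I * τ * ((p.2 : ℂ) + (p.1 : ℂ) / 2) ^ 2) *
        Complex.exp (4 * (π : ℂ) * Complex.I * ((p.2 : ℂ) + (p.1 : ℂ) / 2) * (ρ + 1 / 2)) *
        B p.1 with hf
  set S : Set (ℤ × ℤ) := {p | Even p.1} with hS
  -- even part pointwise computation
  have heven : ∀ q : ℤ × ℤ, f (evenEquiv q) =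
      (Complex.exp (4 * (π : ℂ) * Complex.I * ν * (q.1 : ℂ)) * B (2 * q.1)) *
      (Complex.exp ((π : ℂ) * Complex.I * (2 * τ) * (q.2 : ℂ) ^ 2) *
        Complex.exp (2 * (π : ℂ) * Complex.I * (q.2 : ℂ) * (2 * ρ))) := by
    intro ⟨j, m⟩
    simp only [hf, evenEquiv, Equiv.coe_fn_mk, Int.cast_sub, Int.cast_mul, Int.cast_ofNat]
    push_cast
    have h1 : ((m : ℂ) - j + 2 * j / 2) = (m : ℂ) := by ring
    rw [h1]
    have key : Complex.exp (4 * (π : ℂ) * Complex.I * (m : ℂ) * (ρ + 1 / 2)) =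
        Complex.exp (2 * (π : ℂ) * Complex.I * (m : ℂ) * (2 * ρ)) := by
      have : (4 : ℂ) * π * Complex.I * (m : ℂ) * (ρ + 1 / 2) =
          2 * π * Complex.I * (m : ℂ) * (2 * ρ) + (m : ℂ) * (2 * π * Complex.I) := by ring
      rw [this, Complex.exp_add, Complex.exp_int_mul_two_pi_mul_I, mul_one]
    rw [key]
    have h2 : (2 : ℂ) * π * Complex.I * τ * (m : ℂ) ^ 2 =
        π * Complex.I * (2 * τ) * (m : ℂ) ^ 2 := by ring
    have h3 : (2 : ℂ) * π * Complex.I * ν * (2 * (j : ℂ)) =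
        4 * π * Complex.I * ν * (j : ℂ) := by ring
    rw [h2, h3]
    ring
  have hodd : ∀ q : ℤ × ℤ, f (oddEquiv q) =
      -((Complex.exp (2 * (π : ℂ) * Complex.I * ν * (2 * (q.1 : ℂ) + 1)) * B (2 * q.1 + 1)) *
      (Complex.exp ((π : ℂ) * Complex.I * (2 * τ) * ((q.2 : ℂ) + 1 / 2) ^ 2) *
        Complex.exp (2 * (π : ℂ) * Complex.I * ((q.2 : ℂ) + 1 / 2) * (2 * ρ)))) := by
    intro ⟨j, m⟩
    simp only [hf, oddEquiv, Equiv.coe_fn_mk]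
    push_cast
    have h1 : ((m : ℂ) - j + (2 * j + 1) / 2) = (m : ℂ) + 1 / 2 := by ring
    rw [h1]
    have key : Complex.exp (4 * (π : ℂ) * Complex.I * ((m : ℂ) + 1 / 2) * (ρ + 1 / 2)) =
        -Complex.exp (2 * (π : ℂ) * Complex.I * ((m : ℂ) + 1 / 2) * (2 * ρ)) := by
      have : (4 : ℂ) * π * Complex.I * ((m : ℂ) + 1 / 2) * (ρ + 1 / 2) =
          2 * π * Complex.I * ((m : ℂ) + 1 / 2) * (2 * ρ) +
            ((m : ℂ) * (2 * π * Complex.I) + π * Complex.I) := by ring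
      rw [this, Complex.exp_add, Complex.exp_add, Complex.exp_int_mul_two_pi_mul_I,
        Complex.exp_pi_mul_I]
      ring
    rw [key]
    have h2 : (2 : ℂ) * π * Complex.I * τ * ((m : ℂ) + 1 / 2) ^ 2 =
        π * Complex.I * (2 * τ) * ((m : ℂ) + 1 / 2) ^ 2 := by ring
    rw [h2]
    ring
  -- summability of restrictions
  have hsumS : Summable (f ∘ (↑) : S → ℂ) := hsum.subtype S
  have hsumSc : Summable (f ∘ (↑) : (Sᶜ : Set (ℤ × ℤ)) → ℂ) := hsum.subtype Sᶜ
  have hsplit := Summable.tsum_add_tsum_compl (f := f) hsumS hsumSc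
  rw [← hsplit]
  -- identify S with {p // Even p.1}
  have hSeq : ∑' (x : S), f x = (∑' j : ℤ, Complex.exp (4 * (π : ℂ) * Complex.I * ν * (j : ℂ)) *
      B (2 * j)) * theta3 (2 * τ) (2 * ρ) := by
    have := (evenEquiv.tsum_eq (fun p : {p : ℤ × ℤ // Even p.1} => f p)).symm
    have hid : ∑' (x : S), f x = ∑' p : {p : ℤ × ℤ // Even p.1}, f p := rfl
    rw [hid, ← evenEquiv.tsum_eq (fun p : {p : ℤ × ℤ // Even p.1} => f p)]
    have hsum2 : Summable (fun q : ℤ × ℤ => f (evenEquiv q)) :=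
      (evenEquiv.summable_iff (f := fun p : {p : ℤ × ℤ // Even p.1} => f p)).2 hsumS
    calc ∑' q : ℤ × ℤ, f (evenEquiv q)
        = ∑' (j : ℤ) (m : ℤ), f (evenEquiv (j, m)) := Summable.tsum_prod' hsum2 hsum2.prod_factor
      _ = ∑' (j : ℤ), (Complex.exp (4 * (π : ℂ) * Complex.I * ν * (j : ℂ)) * B (2 * j)) *
            theta3 (2 * τ) (2 * ρ) := by
          refine tsum_congr fun j => ?_
          rw [show (fun m : ℤ => f (evenEquiv (j, m))) = fun m : ℤ =>
            (Complex.exp (4 * (π : ℂ) * Complex.I * ν * (j : ℂ)) * B (2 * j)) *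
            (Complex.exp ((π : ℂ) * Complex.I * (2 * τ) * (m : ℂ) ^ 2) *
              Complex.exp (2 * (π : ℂ) * Complex.I * (m : ℂ) * (2 * ρ)))
            from funext fun m => heven (j, m)]
          rw [tsum_mul_left]
          rfl
      _ = (∑' j : ℤ, Complex.exp (4 * (π : ℂ) * Complex.I * ν * (j : ℂ)) * B (2 * j)) *
            theta3 (2 * τ) (2 * ρ) := tsum_mul_right
  have hSceq : ∑' (x : (Sᶜ : Set (ℤ × ℤ))), f x =
      -((∑' j : ℤ, Complex.exp (2 * (π : ℂ) * Complex.I * ν * (2 * (j : ℂ) + 1)) *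
        B (2 * j + 1)) * theta2 (2 * τ) (2 * ρ)) := by
    have hid : ∑' (x : (Sᶜ : Set (ℤ × ℤ))), f x = ∑' p : {p : ℤ × ℤ // ¬ Even p.1}, f p := rfl
    rw [hid, ← oddEquiv.tsum_eq (fun p : {p : ℤ × ℤ // ¬ Even p.1} => f p)]
    have hsum2 : Summable (fun q : ℤ × ℤ => f (oddEquiv q)) :=
      (oddEquiv.summable_iff (f := fun p : {p : ℤ × ℤ // ¬ Even p.1} => f p)).2 hsumSc
    calc ∑' q : ℤ × ℤ, f (oddEquiv q)
        = ∑' (j : ℤ) (m : ℤ), f (oddEquiv (j, m)) := Summable.tsum_prod' hsum2 hsum2.prod_factor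
      _ = ∑' (j : ℤ), -((Complex.exp (2 * (π : ℂ) * Complex.I * ν * (2 * (j : ℂ) + 1)) *
            B (2 * j + 1)) * theta2 (2 * τ) (2 * ρ)) := by
          refine tsum_congr fun j => ?_
          rw [show (fun m : ℤ => f (oddEquiv (j, m))) = fun m : ℤ =>
            (-(Complex.exp (2 * (π : ℂ) * Complex.I * ν * (2 * (j : ℂ) + 1)) * B (2 * j + 1))) *
            (Complex.exp ((π : ℂ) * Complex.I * (2 * τ) * ((m : ℂ) + 1 / 2) ^ 2) *
              Complex.exp (2 * (π : ℂ) * Complex.I * ((m : ℂ) + 1 / 2) * (2 * ρ)))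
            from funext fun m => by rw [hodd (j, m)]; ring]
          rw [tsum_mul_left]
          show _ = -(_ * theta2 (2 * τ) (2 * ρ))
          rw [theta2]
          ring
      _ = -((∑' j : ℤ, Complex.exp (2 * (π : ℂ) * Complex.I * ν * (2 * (j : ℂ) + 1)) *
            B (2 * j + 1)) * theta2 (2 * τ) (2 * ρ)) := by
          rw [tsum_neg, tsum_mul_right]
  rw [hSeq, hSceq]
  ring
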